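/- arXiv:2205.04033 — 4 statements merged into one kernel-verified Lean document; each statement's English description precedes it below -/
import Mathlib

section
/- Let n ∈ ℕ, β ∈ (0,1], and 0 < m̲ ≤ m̄ be real constants. Let F : ℝⁿ → ℝⁿ be continuously differentiable and let M : ℝⁿ → (n×n real symmetric matrices) be continuous and uniformly bounded, i.e. m̲‖v‖² ≤ vᵀ M(x) v ≤ m̄‖v‖² for all x, v ∈ ℝⁿ. Assume the discrete-time contraction condition: for every x, v ∈ ℝⁿ, (DF(x) v)ᵀ M(F(x)) (DF(x) v) ≤ (1−β) · vᵀ M(x) v, where DF(x) is the Fréchet derivative of F at x. Then the iterated closed-loop map is exponentially incrementally stable: for all x₀, x₀* ∈ ℝⁿ and all k ∈ ℕ, ‖F^[k](x₀) − F^[k](x₀*)‖ ≤ √(m̄/m̲) · (1−β)^{k/2} · ‖x₀ − x₀*‖. -/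
open Matrix

/-- **Theorem 1** (exponential incremental stability under a discrete-time contraction
metric). If the closed-loop map `F` satisfies the pointwise differential contraction
condition with respect to a uniformly bounded symmetric metric `M` and rate `β ∈ (0,1]`,
then iterates of `F` are exponentially incrementally stable. -/
theorem contraction_implies_exponential_incremental_stability
    (n : ℕ) (β : ℝ) (hβ0 : 0 < β) (hβ1 : β ≤ 1)
    (mlo mhi : ℝ) (hmlo : 0 < mlo) (hmm : mlo ≤ mhi)
    (F : EuclideanSpace ℝ (Fin n) → EuclideanSpace ℝ (Fin n))
    (hF : ContDiff ℝ 1 F)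
    (M : EuclideanSpace ℝ (Fin n) → Matrix (Fin n) (Fin n) ℝ)
    (hMsymm : ∀ x, (M x).IsSymm)
    (hMcont : Continuous M)
    (hMlo : ∀ x v : EuclideanSpace ℝ (Fin n), mlo * ‖v‖ ^ 2 ≤ v ⬝ᵥ (M x).mulVec v)
    (hMhi : ∀ x v : EuclideanSpace ℝ (Fin n), v ⬝ᵥ (M x).mulVec v ≤ mhi * ‖v‖ ^ 2)
    (hcontr : ∀ x v : EuclideanSpace ℝ (Fin n),
      (fderiv ℝ F x v) ⬝ᵥ (M (F x)).mulVec (fderiv ℝ F x v)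
        ≤ (1 - β) * (v ⬝ᵥ (M x).mulVec v)) :
    ∀ (x₀ y₀ : EuclideanSpace ℝ (Fin n)) (k : ℕ),
      ‖F^[k] x₀ - F^[k] y₀‖
        ≤ Real.sqrt (mhi / mlo) * (1 - β) ^ ((k : ℝ) / 2) * ‖x₀ - y₀‖ := by
  have hFd : Differentiable ℝ F := hF.differentiable one_ne_zero
  have hβ' : (0:ℝ) ≤ 1 - β := by linarith
  -- differentiability of iterates
  have hdiff : ∀ k : ℕ, Differentiable ℝ (F^[k]) := by
    intro k
    induction k with
    | zero => simpa using differentiable_id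
    | succ k ih =>
      rw [Function.iterate_succ']
      exact hFd.comp ih
  -- energy decay along iterates
  have hV : ∀ (k : ℕ) (x v : EuclideanSpace ℝ (Fin n)),
      (fderiv ℝ (F^[k]) x v) ⬝ᵥ (M (F^[k] x)).mulVec (fderiv ℝ (F^[k]) x v)
        ≤ (1 - β) ^ k * (v ⬝ᵥ (M x).mulVec v) := by
    intro k
    induction k with
    | zero =>
      intro x v
      simp [Function.iterate_zero, fderiv_id']
    | succ k ih =>
      intro x v
      have hcomp : fderiv ℝ (F^[k+1]) x =
          (fderiv ℝ F (F^[k] x)).comp (fderiv ℝ (F^[k]) x) := by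
        rw [Function.iterate_succ']
        exact fderiv_comp x (hFd _) ((hdiff k) x)
      rw [hcomp, Function.iterate_succ_apply']
      simp only [ContinuousLinearMap.comp_apply]
      calc (fderiv ℝ F (F^[k] x) (fderiv ℝ (F^[k]) x v)) ⬝ᵥ
            (M (F (F^[k] x))).mulVec (fderiv ℝ F (F^[k] x) (fderiv ℝ (F^[k]) x v))
          ≤ (1 - β) * ((fderiv ℝ (F^[k]) x v) ⬝ᵥ (M (F^[k] x)).mulVec (fderiv ℝ (F^[k]) x v)) :=
            hcontr _ _
        _ ≤ (1 - β) * ((1 - β) ^ k * (v ⬝ᵥ (M x).mulVec v)) :=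
            mul_le_mul_of_nonneg_left (ih x v) hβ'
        _ = (1 - β) ^ (k+1) * (v ⬝ᵥ (M x).mulVec v) := by ring
  -- constant
  intro x₀ y₀ k
  set C : ℝ := Real.sqrt (mhi / mlo) * (1 - β) ^ ((k : ℝ) / 2) with hC
  have hCeq : C = Real.sqrt (mhi / mlo) * Real.sqrt ((1 - β) ^ k) := by
    rw [hC]
    congr 1
    rw [Real.sqrt_eq_rpow, ← Real.rpow_natCast (1-β) k, ← Real.rpow_mul hβ']
    congr 1
    ring
  have hC0 : 0 ≤ C := by
    rw [hCeq]; positivity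
  -- pointwise norm bound on derivative of iterate
  have hder : ∀ x : EuclideanSpace ℝ (Fin n), ‖fderiv ℝ (F^[k]) x‖ ≤ C := by
    intro x
    apply ContinuousLinearMap.opNorm_le_bound _ hC0
    intro v
    set w := fderiv ℝ (F^[k]) x v with hw
    have h1 : mlo * ‖w‖ ^ 2 ≤ (1 - β) ^ k * (mhi * ‖v‖ ^ 2) := by
      calc mlo * ‖w‖ ^ 2 ≤ w ⬝ᵥ (M (F^[k] x)).mulVec w := hMlo _ _
        _ ≤ (1 - β) ^ k * (v ⬝ᵥ (M x).mulVec v) := hV k x v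
        _ ≤ (1 - β) ^ k * (mhi * ‖v‖ ^ 2) :=
            mul_le_mul_of_nonneg_left (hMhi _ _) (pow_nonneg hβ' k)
    have h2 : ‖w‖ ^ 2 ≤ (mhi / mlo) * ((1 - β) ^ k) * ‖v‖ ^ 2 := by
      rw [div_mul_eq_mul_div, div_mul_eq_mul_div, le_div_iff₀ hmlo]
      nlinarith [h1]
    have h3 : ‖w‖ ≤ Real.sqrt ((mhi / mlo) * ((1 - β) ^ k) * ‖v‖ ^ 2) := by
      rw [← Real.sqrt_sq (norm_nonneg w)]
      exact Real.sqrt_le_sqrt h2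
    calc ‖w‖ ≤ Real.sqrt ((mhi / mlo) * ((1 - β) ^ k) * ‖v‖ ^ 2) := h3
      _ = Real.sqrt (mhi / mlo) * Real.sqrt ((1 - β) ^ k) * ‖v‖ := by
          have h0 : (0:ℝ) ≤ mhi / mlo := div_nonneg (hmlo.le.trans hmm) hmlo.le
          rw [Real.sqrt_mul (mul_nonneg h0 (pow_nonneg hβ' k)),
            Real.sqrt_mul h0, Real.sqrt_sq (norm_nonneg v)]
      _ = C * ‖v‖ := by rw [hCeq]
  -- mean value inequality
  have := Convex.norm_image_sub_le_of_norm_fderiv_le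
    (fun x _ => ((hdiff k) x)) (fun x _ => hder x) convex_univ
    (Set.mem_univ y₀) (Set.mem_univ x₀)
  simpa [hC] using this
end

section
/- Let n, m ∈ ℕ and β ∈ (0,1]. Let M and M₊ be n×n real positive definite matrices, A an n×n real matrix, B an n×m real matrix, and K an m×n real matrix. Set W = M⁻¹, W₊ = M₊⁻¹, and L = K·W. Then the 2×2 block matrix [[W₊, A·W + B·L], [(A·W + B·L)ᵀ, (1−β)·W]] is positive definite if and only if (1−β)·M − (A + B·K)ᵀ · M₊ · (A + B·K) is positive definite. -/
open Matrix

private lemma posDef_conj_left {n : Type*} [Fintype n] [DecidableEq n]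
    {X : Matrix n n ℝ} (hX : X.PosDef)
    (C : Matrix n n ℝ) (hC : IsUnit C) : (Cᴴ * X * C).PosDef := by
  refine PosDef.of_dotProduct_mulVec_pos (isHermitian_conjTranspose_mul_mul _ hX.1) fun x hx => ?_
  have hCx : C *ᵥ x ≠ 0 :=
    ((Matrix.mulVec_injective_iff_isUnit.mpr hC).ne_iff' (Matrix.mulVec_zero C)).mpr hx
  have := hX.dotProduct_mulVec_pos hCx
  rwa [star_mulVec, Matrix.dotProduct_mulVec, Matrix.vecMul_vecMul,
    ← Matrix.dotProduct_mulVec, Matrix.mulVec_mulVec] at this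

private lemma posDef_conj_iff {n : Type*} [Fintype n] [DecidableEq n]
    (X C : Matrix n n ℝ) (hC : IsUnit C) : (Cᴴ * X * C).PosDef ↔ X.PosDef := by
  constructor
  · intro h
    have hCinv : IsUnit C⁻¹ := Matrix.isUnit_nonsing_inv_iff.mpr hC
    have := posDef_conj_left h C⁻¹ hCinv
    have hd : IsUnit C.det := (Matrix.isUnit_iff_isUnit_det _).mp hC
    have key : (C⁻¹)ᴴ * (Cᴴ * X * C) * C⁻¹ = X := by
      rw [Matrix.conjTranspose_nonsing_inv]
      have hdH : IsUnit (Cᴴ).det := by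
        rw [Matrix.det_conjTranspose]; exact hd.star
      calc (Cᴴ)⁻¹ * (Cᴴ * X * C) * C⁻¹
          = ((Cᴴ)⁻¹ * Cᴴ) * X * (C * C⁻¹) := by
            simp only [Matrix.mul_assoc]
        _ = X := by
            rw [Matrix.nonsing_inv_mul _ hdH, Matrix.mul_nonsing_inv _ hd,
              Matrix.one_mul, Matrix.mul_one]
    rwa [key] at this
  · intro h
    exact posDef_conj_left h C hC

private lemma posDef_fromBlocks₁₁' {m n : Type*} [Fintype m] [DecidableEq m] [Fintype n]
    {A : Matrix m m ℝ} (B : Matrix m n ℝ) (D : Matrix n n ℝ) (hA : A.PosDef)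
    [Invertible A] :
    (fromBlocks A B Bᴴ D).PosDef ↔ (D - Bᴴ * A⁻¹ * B).PosDef := by
  rw [posDef_iff_dotProduct_mulVec, posDef_iff_dotProduct_mulVec, Matrix.IsHermitian.fromBlocks₁₁ _ _ hA.1]
  constructor
  · refine fun h => ⟨h.1, fun y hy => ?_⟩
    have hne : (-((A⁻¹ * B) *ᵥ y) ⊕ᵥ y) ≠ 0 := by
      intro hcon
      apply hy
      funext i
      have := congrFun hcon (Sum.inr i)
      simpa using this
    have := h.2 hne
    rw [Matrix.dotProduct_mulVec, Matrix.schur_complement_eq₁₁ B D _ _ hA.1,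
      neg_add_cancel, dotProduct_zero, zero_add] at this
    rw [Matrix.dotProduct_mulVec]; exact this
  · refine fun h => ⟨h.1, fun x hx => ?_⟩
    rw [Matrix.dotProduct_mulVec, ← Sum.elim_comp_inl_inr x,
      Matrix.schur_complement_eq₁₁ B D _ _ hA.1]
    by_cases hxr : x ∘ Sum.inr = 0
    · have hxl : x ∘ Sum.inl ≠ 0 := by
        intro hcon
        apply hx
        funext i
        cases i with
        | inl i => exact congrFun hcon i
        | inr i => exact congrFun hxr i
      have h1 : (0:ℝ) < star (x ∘ Sum.inl + (A⁻¹ * B) *ᵥ (x ∘ Sum.inr)) ᵥ* A ⬝ᵥ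
          (x ∘ Sum.inl + (A⁻¹ * B) *ᵥ (x ∘ Sum.inr)) := by
        rw [← Matrix.dotProduct_mulVec]
        refine hA.dotProduct_mulVec_pos ?_
        rw [hxr, Matrix.mulVec_zero, add_zero]
        exact hxl
      have h2 : (0:ℝ) ≤ star (x ∘ Sum.inr) ᵥ* (D - Bᴴ * A⁻¹ * B) ⬝ᵥ (x ∘ Sum.inr) := by
        rw [hxr]
        simp
      linarith
    · have h1 : (0:ℝ) ≤ star (x ∘ Sum.inl + (A⁻¹ * B) *ᵥ (x ∘ Sum.inr)) ᵥ* A ⬝ᵥ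
          (x ∘ Sum.inl + (A⁻¹ * B) *ᵥ (x ∘ Sum.inr)) := by
        rw [← Matrix.dotProduct_mulVec]
        exact hA.posSemidef.dotProduct_mulVec_nonneg _
      have h2 : (0:ℝ) < star (x ∘ Sum.inr) ᵥ* (D - Bᴴ * A⁻¹ * B) ⬝ᵥ (x ∘ Sum.inr) := by
        rw [← Matrix.dotProduct_mulVec]
        exact h.2 hxr
      linarith

/-- **Corollary 1** (tractable synthesis condition): with `W = M⁻¹`, `W₊ = M₊⁻¹` and
`L = K W`, the block LMI (15)
`[[W₊, A W + B L],[(A W + B L)ᵀ, (1−β) W]] ≻ 0`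
holds iff the contraction condition (16)
`(1−β) M − (A + B K)ᵀ M₊ (A + B K) ≻ 0` holds. -/
theorem synthesis_LMI_iff_contraction
    (n m : ℕ) (β : ℝ) (hβ0 : 0 < β) (hβ1 : β ≤ 1)
    (M Mp : Matrix (Fin n) (Fin n) ℝ) (hM : M.PosDef) (hMp : Mp.PosDef)
    (A : Matrix (Fin n) (Fin n) ℝ) (B : Matrix (Fin n) (Fin m) ℝ)
    (K : Matrix (Fin m) (Fin n) ℝ)
    (W Wp : Matrix (Fin n) (Fin n) ℝ) (L : Matrix (Fin m) (Fin n) ℝ)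
    (hW : W = M⁻¹) (hWp : Wp = Mp⁻¹) (hL : L = K * W) :
    (Matrix.fromBlocks Wp (A * W + B * L) (A * W + B * L)ᵀ ((1 - β) • W)).PosDef ↔
      ((1 - β) • M - (A + B * K)ᵀ * Mp * (A + B * K)).PosDef := by
  subst hL hW hWp
  haveI : Invertible Mp := hMp.isUnit.invertible
  haveI : Invertible (Mp⁻¹) := hMp.inv.isUnit.invertible
  have hWpd : (Mp⁻¹).PosDef := hMp.inv
  have hMH : (M⁻¹)ᴴ = M⁻¹ := hM.isHermitian.inv
  have hMu : IsUnit M.det := (Matrix.isUnit_iff_isUnit_det _).mp hM.isUnit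
  have hE : A * M⁻¹ + B * (K * M⁻¹) = (A + B * K) * M⁻¹ := by
    rw [Matrix.add_mul, Matrix.mul_assoc]
  rw [← conjTranspose_eq_transpose_of_trivial, posDef_fromBlocks₁₁' _ _ hWpd,
    Matrix.inv_inv_of_invertible, hE]
  have key : (1 - β) • M⁻¹ - ((A + B * K) * M⁻¹)ᴴ * Mp * ((A + B * K) * M⁻¹) =
      (M⁻¹)ᴴ * ((1 - β) • M - (A + B * K)ᵀ * Mp * (A + B * K)) * M⁻¹ := by
    rw [hMH]
    rw [Matrix.conjTranspose_mul, hMH, conjTranspose_eq_transpose_of_trivial]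
    rw [Matrix.mul_sub, Matrix.sub_mul]
    congr 1
    · rw [Matrix.mul_smul, Matrix.smul_mul, Matrix.nonsing_inv_mul _ hMu, Matrix.one_mul]
    · simp only [Matrix.mul_assoc]
  rw [key, posDef_conj_iff _ _ (Matrix.isUnit_nonsing_inv_iff.mpr hM.isUnit)]
end

section
/- Let n, p ∈ ℕ, β ∈ (0,1], α > 0, and T ∈ ℕ. For each k ∈ ℕ let A(k) be an n×n real matrix, B(k) an n×p real matrix, and M(k) an n×n real positive semidefinite symmetric matrix, and suppose the dissipation matrix inequality holds for each k ≤ T: [A(k) B(k)]ᵀ · M(k+1) · [A(k) B(k)] ≼ fromBlocks((1−β)·M(k) − I, 0; 0, α²·I), where [A(k) B(k)] is the n×(n+p) matrix with column blocks A(k) and B(k) and ≼ denotes the positive-semidefinite (Loewner) order. Let δ : ℕ → ℝⁿ and w : ℕ → ℝᵖ satisfy δ(k+1) = A(k)·δ(k) + B(k)·w(k). Then the truncated ℓ₂ gain bound holds: Σ_{k=0}^{T} ‖δ(k)‖² ≤ δ(0)ᵀ·M(0)·δ(0) + α² · Σ_{k=0}^{T} ‖w(k)‖². -/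
open Matrix

lemma euc_norm_sq_eq_dot {m : ℕ} (x : EuclideanSpace ℝ (Fin m)) :
    ‖x‖ ^ 2 = x ⬝ᵥ x := by
  rw [EuclideanSpace.norm_eq, Real.sq_sqrt (by positivity)]
  simp [dotProduct, sq]

/-- **Proposition 2** (bounded incremental truncated ℓ₂ gain): if the closed-loop
differential dynamics `δ(k+1) = A(k) δ(k) + B(k) w(k)` satisfy, for each `k ≤ T`, the
dissipation matrix inequality
`[A(k) B(k)]ᵀ M(k+1) [A(k) B(k)] ≼ blkdiag((1−β) M(k) − I, α² I)`,
with `M(k)` positive semidefinite symmetric, then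
`Σ_{k=0}^{T} ‖δ(k)‖² ≤ δ(0)ᵀ M(0) δ(0) + α² Σ_{k=0}^{T} ‖w(k)‖²`. -/
theorem truncated_l2_gain_bound
    (n p : ℕ) (β : ℝ) (hβ0 : 0 < β) (hβ1 : β ≤ 1) (α : ℝ) (hα : 0 < α) (T : ℕ)
    (A : ℕ → Matrix (Fin n) (Fin n) ℝ)
    (B : ℕ → Matrix (Fin n) (Fin p) ℝ)
    (M : ℕ → Matrix (Fin n) (Fin n) ℝ)
    (hMsymm : ∀ k, (M k).IsSymm)
    (hMpsd : ∀ k, (M k).PosSemidef)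
    (hdiss : ∀ k ≤ T,
      (Matrix.fromBlocks ((1 - β) • M k - 1) 0 0 (α ^ 2 • (1 : Matrix (Fin p) (Fin p) ℝ))
        - (Matrix.fromCols (A k) (B k))ᵀ * M (k + 1) *
            Matrix.fromCols (A k) (B k)).PosSemidef)
    (δ : ℕ → EuclideanSpace ℝ (Fin n))
    (w : ℕ → EuclideanSpace ℝ (Fin p))
    (hdyn : ∀ k, δ (k + 1)
      = (EuclideanSpace.equiv (Fin n) ℝ).symm ((A k).mulVec (δ k) + (B k).mulVec (w k))) :
    ∑ k ∈ Finset.range (T + 1), ‖δ k‖ ^ 2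
      ≤ (δ 0) ⬝ᵥ (M 0).mulVec (δ 0) + α ^ 2 * ∑ k ∈ Finset.range (T + 1), ‖w k‖ ^ 2 := by
  set V : ℕ → ℝ := fun k => (δ k) ⬝ᵥ (M k).mulVec (δ k) with hV
  have hV0 : ∀ k, 0 ≤ V k := fun k => (hMpsd k).dotProduct_mulVec_nonneg (δ k)
  have hstep : ∀ k ≤ T, V (k + 1) + ‖δ k‖ ^ 2 ≤ V k + α ^ 2 * ‖w k‖ ^ 2 := by
    intro k hk
    have h := (hdiss k hk).dotProduct_mulVec_nonneg (Sum.elim (δ k) (w k))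
    set z : Fin n ⊕ Fin p → ℝ := Sum.elim (δ k) (w k) with hz
    have hF : (Matrix.fromCols (A k) (B k)).mulVec z
        = (A k).mulVec (δ k) + (B k).mulVec (w k) :=
      Matrix.fromCols_mulVec_sumElim _ _ _ _
    have hδ1 : (δ (k+1) : Fin n → ℝ) = (A k).mulVec (δ k) + (B k).mulVec (w k) := by
      rw [hdyn k]; rfl
    have hquad : z ⬝ᵥ ((Matrix.fromCols (A k) (B k))ᵀ * M (k + 1) *
        Matrix.fromCols (A k) (B k)).mulVec z = V (k+1) := by
      rw [← Matrix.mulVec_mulVec, dotProduct_mulVec, ← Matrix.vecMul_vecMul,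
        Matrix.vecMul_transpose, hF, ← hδ1, ← dotProduct_mulVec]
    have hblk : z ⬝ᵥ (Matrix.fromBlocks ((1 - β) • M k - 1) 0 0
        (α ^ 2 • (1 : Matrix (Fin p) (Fin p) ℝ))).mulVec z
        = (1 - β) * V k - ‖δ k‖ ^ 2 + α ^ 2 * ‖w k‖ ^ 2 := by
      rw [hz, Matrix.fromBlocks_mulVec, sumElim_dotProduct_sumElim]
      simp only [Matrix.zero_mulVec, add_zero, zero_add, Matrix.sub_mulVec,
        Matrix.smul_mulVec, Matrix.one_mulVec, dotProduct_sub,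
        dotProduct_smul]
      rw [euc_norm_sq_eq_dot (δ k), euc_norm_sq_eq_dot (w k)]
      simp [hV, smul_eq_mul]
      try ring
    rw [Matrix.sub_mulVec, dotProduct_sub, star_trivial, hquad, hblk] at h
    nlinarith [hV0 k]
  have key : ∀ N ≤ T + 1, ∑ k ∈ Finset.range N, ‖δ k‖ ^ 2 + V N
      ≤ V 0 + α ^ 2 * ∑ k ∈ Finset.range N, ‖w k‖ ^ 2 := by
    intro N hN
    induction N with
    | zero => simp
    | succ m ih =>
      have hm : m ≤ T := Nat.lt_succ_iff.mp hN
      have := hstep m hm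
      have ihm := ih (le_of_lt hN)
      rw [Finset.sum_range_succ, Finset.sum_range_succ]
      nlinarith
  have := key (T + 1) le_rfl
  have := hV0 (T + 1)
  linarith
end

section
/- Let n ∈ ℕ, β ∈ (0,1], and 0 < m̲ ≤ m̄ be real constants. Let (F_k)_{k ∈ ℕ} be a sequence of continuously differentiable maps F_k : ℝⁿ → ℝⁿ and let M : ℝⁿ → (n×n real symmetric matrices) be continuous and uniformly bounded, i.e. m̲‖v‖² ≤ vᵀ M(x) v ≤ m̄‖v‖² for all x, v ∈ ℝⁿ. Assume that for every k ∈ ℕ and every x, v ∈ ℝⁿ, (DF_k(x) v)ᵀ · M(F_k(x)) · (DF_k(x) v) ≤ (1−β) · vᵀ · M(x) · v. Let x, x* : ℕ → ℝⁿ be two trajectories of the time-varying system, i.e. x(k+1) = F_k(x(k)) and x*(k+1) = F_k(x*(k)) for all k. Then for all k ∈ ℕ: ‖x(k) − x*(k)‖ ≤ √(m̄/m̲) · (1−β)^{k/2} · ‖x(0) − x*(0)‖. -/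
open Matrix

noncomputable def gamAux {E : Type*} [NormedAddCommGroup E] [NormedSpace ℝ E]
    (F : ℕ → E → E) (a b : E) : ℕ → ℝ → E
  | 0 => fun t => b + t • (a - b)
  | (k+1) => fun t => F k (gamAux F a b k t)

noncomputable def dvAux {E : Type*} [NormedAddCommGroup E] [NormedSpace ℝ E]
    (F : ℕ → E → E) (a b : E) : ℕ → ℝ → E
  | 0 => fun _ => a - b
  | (k+1) => fun t => fderiv ℝ (F k) (gamAux F a b k t) (dvAux F a b k t)

/-- Convergence claim of Proposition 1 / Corollary 1 under exact disturbance
measurement: for the time-varying closed-loop maps `F_k` satisfying the pointwise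
differential contraction condition with respect to a uniformly bounded symmetric
metric `M`, any two trajectories `x(k+1) = F_k(x(k))`, `x*(k+1) = F_k(x*(k))`
converge to each other exponentially:
`‖x(k) − x*(k)‖ ≤ √(m̄/m̲) (1−β)^{k/2} ‖x(0) − x*(0)‖`. -/
theorem timeVarying_contraction_exponential_incremental_stability
    (n : ℕ) (β : ℝ) (hβ0 : 0 < β) (hβ1 : β ≤ 1)
    (mlo mhi : ℝ) (hmlo : 0 < mlo) (hmm : mlo ≤ mhi)
    (F : ℕ → EuclideanSpace ℝ (Fin n) → EuclideanSpace ℝ (Fin n))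
    (hF : ∀ k, ContDiff ℝ 1 (F k))
    (M : EuclideanSpace ℝ (Fin n) → Matrix (Fin n) (Fin n) ℝ)
    (hMsymm : ∀ x, (M x).IsSymm)
    (hMcont : Continuous M)
    (hMlo : ∀ x v : EuclideanSpace ℝ (Fin n), mlo * ‖v‖ ^ 2 ≤ v ⬝ᵥ (M x).mulVec v)
    (hMhi : ∀ x v : EuclideanSpace ℝ (Fin n), v ⬝ᵥ (M x).mulVec v ≤ mhi * ‖v‖ ^ 2)
    (hcontr : ∀ (k : ℕ) (x v : EuclideanSpace ℝ (Fin n)),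
      (fderiv ℝ (F k) x v) ⬝ᵥ (M (F k x)).mulVec (fderiv ℝ (F k) x v)
        ≤ (1 - β) * (v ⬝ᵥ (M x).mulVec v))
    (x xs : ℕ → EuclideanSpace ℝ (Fin n))
    (hx : ∀ k, x (k + 1) = F k (x k))
    (hxs : ∀ k, xs (k + 1) = F k (xs k)) :
    ∀ k : ℕ, ‖x k - xs k‖
      ≤ Real.sqrt (mhi / mlo) * (1 - β) ^ ((k : ℝ) / 2) * ‖x 0 - xs 0‖ := by
  set γ := gamAux F (x 0) (xs 0) with hγdef
  set d := dvAux F (x 0) (xs 0) with hddef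
  -- derivatives
  have hderiv : ∀ k t, HasDerivAt (γ k) (d k t) t := by
    intro k
    induction k with
    | zero =>
      intro t
      have : HasDerivAt (fun t : ℝ => xs 0 + t • (x 0 - xs 0)) ((1:ℝ) • (x 0 - xs 0)) t :=
        ((hasDerivAt_id t).smul_const (x 0 - xs 0)).const_add (xs 0)
      simpa [hγdef, hddef, gamAux, dvAux, one_smul] using this
    | succ k ih =>
      intro t
      have h1 : HasFDerivAt (F k) (fderiv ℝ (F k) (γ k t)) (γ k t) :=
        (((hF k).differentiable one_ne_zero) (γ k t)).hasFDerivAt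
      have := h1.comp_hasDerivAt t (ih t)
      exact this
  have hγcont : ∀ k, Continuous (γ k) := fun k =>
    continuous_iff_continuousAt.2 fun t => (hderiv k t).continuousAt
  have hdcont : ∀ k, Continuous (d k) := by
    intro k
    induction k with
    | zero => exact continuous_const
    | succ k ih =>
      have : Continuous (fun t => fderiv ℝ (F k) (γ k t)) :=
        ((hF k).continuous_fderiv one_ne_zero).comp (hγcont k)
      simpa [hddef, dvAux] using this.clm_apply ih
  -- energy
  set e : ℕ → ℝ → ℝ := fun k t => Real.sqrt ((d k t) ⬝ᵥ (M (γ k t)).mulVec (d k t)) with hedef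
  have hq0 : ∀ (y v : EuclideanSpace ℝ (Fin n)), 0 ≤ v ⬝ᵥ (M y).mulVec v := fun y v =>
    le_trans (by positivity) (hMlo y v)
  have he_cont : ∀ k, Continuous (e k) := by
    intro k
    apply Real.continuous_sqrt.comp
    have hd' : Continuous fun t => (d k t).ofLp := (PiLp.continuous_ofLp 2 _).comp (hdcont k)
    exact hd'.dotProduct ((hMcont.comp (hγcont k)).matrix_mulVec hd')
  -- pointwise bounds
  have h_lower_pt : ∀ k t, Real.sqrt mlo * ‖d k t‖ ≤ e k t := by
    intro k t
    have := Real.sqrt_le_sqrt (hMlo (γ k t) (d k t))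
    rwa [Real.sqrt_mul hmlo.le, Real.sqrt_sq (norm_nonneg _)] at this
  have h_upper0 : ∀ t : ℝ, e 0 t ≤ Real.sqrt mhi * ‖x 0 - xs 0‖ := by
    intro t
    have h1 : e 0 t = Real.sqrt ((x 0 - xs 0) ⬝ᵥ (M (γ 0 t)).mulVec (x 0 - xs 0)) := by
      simp [hedef, hddef, dvAux]
    rw [h1]
    have := Real.sqrt_le_sqrt (hMhi (γ 0 t) (x 0 - xs 0))
    rwa [Real.sqrt_mul (le_trans hmlo.le hmm), Real.sqrt_sq (norm_nonneg _)] at this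
  have h_step_pt : ∀ k t, e (k+1) t ≤ Real.sqrt (1 - β) * e k t := by
    intro k t
    have h1 : e (k+1) t = Real.sqrt ((fderiv ℝ (F k) (γ k t) (d k t)) ⬝ᵥ
        (M (F k (γ k t))).mulVec (fderiv ℝ (F k) (γ k t) (d k t))) := by
      simp [hedef, hddef, hγdef, dvAux, gamAux]
    rw [h1]
    have := Real.sqrt_le_sqrt (hcontr k (γ k t) (d k t))
    rw [Real.sqrt_mul (by linarith)] at this
    exact this
  -- integrals
  set I : ℕ → ℝ := fun k => ∫ t in (0:ℝ)..1, e k t with hIdef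
  have hI_nonneg : ∀ k, 0 ≤ I k := fun k =>
    intervalIntegral.integral_nonneg (by norm_num) (fun t _ => Real.sqrt_nonneg _)
  have hI_step : ∀ k, I (k+1) ≤ Real.sqrt (1 - β) * I k := by
    intro k
    have h1 : I (k+1) ≤ ∫ t in (0:ℝ)..1, Real.sqrt (1-β) * e k t := by
      apply intervalIntegral.integral_mono_on (by norm_num)
        ((he_cont (k+1)).intervalIntegrable _ _)
        ((continuous_const.mul (he_cont k)).intervalIntegrable _ _)
      exact fun t _ => h_step_pt k t
    rwa [intervalIntegral.integral_const_mul] at h1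
  have hI_iter : ∀ k, I k ≤ (Real.sqrt (1-β))^k * I 0 := by
    intro k
    induction k with
    | zero => simp
    | succ k ih =>
      calc I (k+1) ≤ Real.sqrt (1-β) * I k := hI_step k
        _ ≤ Real.sqrt (1-β) * ((Real.sqrt (1-β))^k * I 0) :=
            mul_le_mul_of_nonneg_left ih (Real.sqrt_nonneg _)
        _ = (Real.sqrt (1-β))^(k+1) * I 0 := by ring
  have hI0 : I 0 ≤ Real.sqrt mhi * ‖x 0 - xs 0‖ := by
    have h1 : I 0 ≤ ∫ _t in (0:ℝ)..1, Real.sqrt mhi * ‖x 0 - xs 0‖ := by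
      apply intervalIntegral.integral_mono_on (by norm_num)
        ((he_cont 0).intervalIntegrable _ _)
        (intervalIntegrable_const)
      exact fun t _ => h_upper0 t
    simpa using h1
  -- endpoints
  have hγ0 : ∀ k, γ k 0 = xs k := by
    intro k
    induction k with
    | zero => simp [hγdef, gamAux]
    | succ k ih =>
      rw [hxs]
      show F k (γ k 0) = F k (xs k)
      rw [ih]
  have hγ1 : ∀ k, γ k 1 = x k := by
    intro k
    induction k with
    | zero => simp [hγdef, gamAux]
    | succ k ih =>
      rw [hx]
      show F k (γ k 1) = F k (x k)
      rw [ih]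
  -- lower bound of I k
  have h_low : ∀ k, Real.sqrt mlo * ‖x k - xs k‖ ≤ I k := by
    intro k
    have hint : (∫ t in (0:ℝ)..1, d k t) = γ k 1 - γ k 0 :=
      intervalIntegral.integral_eq_sub_of_hasDerivAt
        (fun t _ => hderiv k t) ((hdcont k).intervalIntegrable _ _)
    have h1 : ‖x k - xs k‖ ≤ ∫ t in (0:ℝ)..1, ‖d k t‖ := by
      rw [← hγ1 k, ← hγ0 k, ← hint]
      exact intervalIntegral.norm_integral_le_integral_norm (by norm_num)
    have h2 : Real.sqrt mlo * ∫ t in (0:ℝ)..1, ‖d k t‖ ≤ I k := by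
      rw [← intervalIntegral.integral_const_mul]
      apply intervalIntegral.integral_mono_on (by norm_num)
        ((continuous_const.mul (hdcont k).norm).intervalIntegrable _ _)
        ((he_cont k).intervalIntegrable _ _)
      exact fun t _ => h_lower_pt k t
    calc Real.sqrt mlo * ‖x k - xs k‖
        ≤ Real.sqrt mlo * ∫ t in (0:ℝ)..1, ‖d k t‖ :=
          mul_le_mul_of_nonneg_left h1 (Real.sqrt_nonneg _)
      _ ≤ I k := h2
  -- conclude
  intro k
  have hsl : 0 < Real.sqrt mlo := Real.sqrt_pos.2 hmlo
  rw [← mul_le_mul_iff_right₀ hsl]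
  have hrhs : Real.sqrt mlo * (Real.sqrt (mhi / mlo) * (1 - β) ^ ((k : ℝ) / 2) * ‖x 0 - xs 0‖)
      = (Real.sqrt (1-β))^k * (Real.sqrt mhi * ‖x 0 - xs 0‖) := by
    have h1 : Real.sqrt mlo * Real.sqrt (mhi / mlo) = Real.sqrt mhi := by
      rw [← Real.sqrt_mul hmlo.le, mul_div_cancel₀ _ hmlo.ne']
    have h2 : (1 - β : ℝ) ^ ((k : ℝ) / 2) = (Real.sqrt (1-β))^k := by
      rw [Real.sqrt_eq_rpow, ← Real.rpow_natCast ((1-β) ^ ((1:ℝ)/2)) k,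
        ← Real.rpow_mul (by linarith)]
      ring_nf
    rw [h2]
    calc Real.sqrt mlo * (Real.sqrt (mhi / mlo) * (Real.sqrt (1-β))^k * ‖x 0 - xs 0‖)
        = (Real.sqrt mlo * Real.sqrt (mhi / mlo)) * ((Real.sqrt (1-β))^k * ‖x 0 - xs 0‖) := by
          ring
      _ = (Real.sqrt (1-β))^k * (Real.sqrt mhi * ‖x 0 - xs 0‖) := by rw [h1]; ring
  rw [hrhs]
  calc Real.sqrt mlo * ‖x k - xs k‖ ≤ I k := h_low k
    _ ≤ (Real.sqrt (1-β))^k * I 0 := hI_iter k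
    _ ≤ (Real.sqrt (1-β))^k * (Real.sqrt mhi * ‖x 0 - xs 0‖) :=
        mul_le_mul_of_nonneg_left hI0 (pow_nonneg (Real.sqrt_nonneg _) k)
end
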